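/- For every integer a ≥ 2 and every real x ∈ (1 − 2^{1−a}, 1 − 2^{-a}], the relative toll satisfies (ν(x) − x·log₂(1/x))/x < 2 − (1−x)·(a − 2 + 1/ln 2). -/

import Mathlib

noncomputable def epsBit (d : ℕ) (x : ℝ) : ℝ := ((⌊2 ^ d * x⌋ % 2 : ℤ) : ℝ)

-- basic facts
lemma epsBit_nonneg (d : ℕ) (x : ℝ) : 0 ≤ epsBit d x := by
  unfold epsBit
  have := Int.emod_two_eq (⌊2 ^ d * x⌋)
  rcases this with h | h <;> rw [h] <;> norm_num

lemma epsBit_le_one (d : ℕ) (x : ℝ) : epsBit d x ≤ 1 := by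
  unfold epsBit
  have := Int.emod_two_eq (⌊2 ^ d * x⌋)
  rcases this with h | h <;> rw [h] <;> norm_num

lemma floor_rec (y : ℝ) : ⌊2 * y⌋ = 2 * ⌊y⌋ + ⌊2 * y⌋ % 2 := by
  have h1 : 2 * ⌊y⌋ ≤ ⌊2 * y⌋ := by
    rw [Int.le_floor]; push_cast
    nlinarith [Int.floor_le y]
  have h2 : ⌊2 * y⌋ < 2 * ⌊y⌋ + 2 := by
    rw [Int.floor_lt]; push_cast
    nlinarith [Int.lt_floor_add_one y]
  omega

lemma partial_sum_eq (x : ℝ) (hx0 : 0 ≤ x) (hx1 : x < 1) (N : ℕ) :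
    ∑ d ∈ Finset.range (N + 1), epsBit d x / 2 ^ d = (⌊2 ^ N * x⌋ : ℝ) / 2 ^ N := by
  induction N with
  | zero =>
    have h0 : ⌊x⌋ = 0 := Int.floor_eq_zero_iff.2 ⟨hx0, hx1⟩
    simp [epsBit, h0]
  | succ N ih =>
    rw [Finset.sum_range_succ, ih]
    have hrec : ⌊2 ^ (N + 1) * x⌋ = 2 * ⌊2 ^ N * x⌋ + ⌊2 ^ (N + 1) * x⌋ % 2 := by
      have := floor_rec (2 ^ N * x)
      have he : (2 : ℝ) ^ (N + 1) * x = 2 * (2 ^ N * x) := by ring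
      rw [he]; convert this using 3 <;> ring
    have key : ((⌊2 ^ (N + 1) * x⌋ : ℤ) : ℝ) = 2 * (⌊2 ^ N * x⌋ : ℤ) + epsBit (N + 1) x := by
      unfold epsBit
      nth_rewrite 1 [hrec]
      push_cast
      ring_nf
    rw [show ((⌊2 ^ (N + 1) * x⌋ : ℤ) : ℝ) / 2 ^ (N + 1) = (2 * (⌊2 ^ N * x⌋ : ℤ) + epsBit (N + 1) x) / 2 ^ (N + 1) by rw [key]]
    have h2 : (2 : ℝ) ^ N ≠ 0 := by positivity
    field_simp
    ring

lemma summable_eps (x : ℝ) : Summable (fun d : ℕ => epsBit d x / 2 ^ d) := by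
  apply Summable.of_nonneg_of_le (fun d => div_nonneg (epsBit_nonneg d x) (by positivity))
    (fun d => ?_) (summable_geometric_of_lt_one (by norm_num) (by norm_num : (1:ℝ)/2 < 1))
  rw [div_pow, one_pow]
  exact div_le_div_of_nonneg_right (epsBit_le_one d x) (by positivity) |>.trans_eq rfl

lemma hasSum_eps (x : ℝ) (hx0 : 0 ≤ x) (hx1 : x < 1) :
    HasSum (fun d : ℕ => epsBit d x / 2 ^ d) x := by
  have hs := summable_eps x
  have h1 : Filter.Tendsto (fun N : ℕ => ∑ d ∈ Finset.range (N + 1), epsBit d x / 2 ^ d)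
      Filter.atTop (nhds (∑' d : ℕ, epsBit d x / 2 ^ d)) :=
    hs.hasSum.tendsto_sum_nat.comp (Filter.tendsto_add_atTop_nat 1)
  have h2 : Filter.Tendsto (fun N : ℕ => ∑ d ∈ Finset.range (N + 1), epsBit d x / 2 ^ d)
      Filter.atTop (nhds x) := by
    have heq : (fun N : ℕ => ∑ d ∈ Finset.range (N + 1), epsBit d x / 2 ^ d)
        = fun N : ℕ => (⌊2 ^ N * x⌋ : ℝ) / 2 ^ N := funext (partial_sum_eq x hx0 hx1)
    rw [heq]
    have hg : Filter.Tendsto (fun N : ℕ => x - (1/2) ^ N) Filter.atTop (nhds x) := by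
      have := tendsto_pow_atTop_nhds_zero_of_lt_one (by norm_num : (0:ℝ) ≤ 1/2)
        (by norm_num : (1:ℝ)/2 < 1)
      simpa using Filter.Tendsto.const_sub x this
    apply tendsto_of_tendsto_of_tendsto_of_le_of_le hg
      (tendsto_const_nhds (x := (x : ℝ)))
    · intro N
      have hp : (0:ℝ) < 2 ^ N := by positivity
      show x - (1/2) ^ N ≤ (⌊2 ^ N * x⌋ : ℝ) / 2 ^ N
      rw [le_div_iff₀ hp]
      have h12 : ((1:ℝ)/2) ^ N = 1 / 2 ^ N := by rw [div_pow, one_pow]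
      rw [h12]
      have := Int.lt_floor_add_one (2 ^ N * x)
      field_simp
      rw [mul_comm x ((2:ℝ) ^ N)]
      linarith
    · intro N
      have hp : (0:ℝ) < 2 ^ N := by positivity
      show (⌊2 ^ N * x⌋ : ℝ) / 2 ^ N ≤ x
      rw [div_le_iff₀ hp]
      nlinarith [Int.floor_le (2 ^ N * x)]
  have h3 := hs.hasSum
  rwa [tendsto_nhds_unique h1 h2] at h3

noncomputable def nu (x : ℝ) : ℝ := ∑' d : ℕ, (d : ℝ) * epsBit d x / 2 ^ d

lemma hasSum_g : HasSum (fun d : ℕ => (d : ℝ) / 2 ^ d) 2 := by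
  have h := hasSum_coe_mul_geometric_of_norm_lt_one
    (r := (1/2 : ℝ)) (by rw [Real.norm_eq_abs, abs_of_pos] <;> norm_num)
  have : (1/2 : ℝ) / (1 - 1/2) ^ 2 = 2 := by norm_num
  rw [this] at h
  convert h using 2 with d
  · rfl
  rw [div_pow, one_pow]
  ring

lemma hasSum_geo : HasSum (fun d : ℕ => (1 : ℝ) / 2 ^ d) 2 := by
  have h := hasSum_geometric_of_lt_one (by norm_num : (0:ℝ) ≤ 1/2) (by norm_num : (1:ℝ)/2 < 1)
  have : ((1:ℝ) - 1/2)⁻¹ = 2 := by norm_num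
  rw [this] at h
  convert h using 2 with d
  rw [div_pow, one_pow]

lemma summable_f (x : ℝ) : Summable (fun d : ℕ => (d : ℝ) * epsBit d x / 2 ^ d) := by
  apply Summable.of_nonneg_of_le
    (fun d => div_nonneg (mul_nonneg (by positivity) (epsBit_nonneg d x)) (by positivity))
    (fun d => ?_) hasSum_g.summable
  apply div_le_div_of_nonneg_right _ (by positivity)
  nlinarith [epsBit_le_one d x, epsBit_nonneg d x, Nat.cast_nonneg (α := ℝ) d]

lemma nu_le (a : ℕ) (ha : 2 ≤ a) (x : ℝ) (hlo : 1 - 2 / 2 ^ a < x) (hhi : x ≤ 1 - 1 / 2 ^ a) :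
    nu x ≤ 2 - (a : ℝ) * (1 - x) := by
  have hpa : (0:ℝ) < 2 ^ a := by positivity
  have hx1 : x < 1 := by
    have : (0:ℝ) < 1 / 2 ^ a := by positivity
    linarith
  have hx0 : 0 ≤ x := by
    have h4 : (4:ℝ) ≤ 2 ^ a := by
      calc (4:ℝ) = 2 ^ 2 := by norm_num
      _ ≤ 2 ^ a := by exact pow_le_pow_right₀ (by norm_num) ha
    have : (2:ℝ) / 2 ^ a ≤ 1/2 := by
      rw [div_le_div_iff₀ hpa (by norm_num)]; linarith
    linarith
  -- bits 1..a-1 are 1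
  have bits_one : ∀ d : ℕ, 1 ≤ d → d < a → epsBit d x = 1 := by
    intro d h1 h2
    have hfl : ⌊(2:ℝ) ^ d * x⌋ = 2 ^ d - 1 := by
      rw [Int.floor_eq_iff]
      constructor
      · push_cast
        have hle : (2:ℝ) ^ (d+1) ≤ 2 ^ a := pow_le_pow_right₀ (by norm_num) (by omega)
        have : (2:ℝ) ^ d * (2 / 2 ^ a) ≤ 1 := by
          rw [← mul_div_assoc, div_le_one hpa]
          calc (2:ℝ) ^ d * 2 = 2 ^ (d+1) := by ring
          _ ≤ 2 ^ a := hle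
        nlinarith [pow_pos (by norm_num : (0:ℝ) < 2) d]
      · push_cast
        nlinarith [pow_pos (by norm_num : (0:ℝ) < 2) d]
    unfold epsBit
    rw [hfl]
    have hdvd : (2:ℤ) ∣ 2 ^ d := dvd_pow_self 2 (by omega)
    have : ((2:ℤ) ^ d - 1) % 2 = 1 := by omega
    rw [this]; norm_num
  have heps0 : epsBit 0 x = 0 := by
    unfold epsBit
    have h0 : ⌊(2:ℝ)^0 * x⌋ = 0 := by
      rw [pow_zero, one_mul]; exact Int.floor_eq_zero_iff.2 ⟨hx0, hx1⟩
    rw [h0]; norm_num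
  -- D d := d*(1 - eps)/2^d, G d := (1-eps)/2^d
  set G : ℕ → ℝ := fun d => (1 - epsBit d x) / 2 ^ d with hG
  set D : ℕ → ℝ := fun d => (d : ℝ) * (1 - epsBit d x) / 2 ^ d with hD
  have hsum_eps := hasSum_eps x hx0 hx1
  have hhasG : HasSum G (2 - x) := by
    have := hasSum_geo.sub hsum_eps
    convert this using 2 with d
    · rfl
    simp only [hG]
    ring
  have hhasD : HasSum D (2 - nu x) := by
    have := hasSum_g.sub (summable_f x).hasSum
    convert this using 2 with d
    · rfl
    simp only [hD]
    ring
    rfl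
  have hGnn : ∀ d, 0 ≤ G d := fun d => div_nonneg (by linarith [epsBit_le_one d x]) (by positivity)
  have hDnn : ∀ d, 0 ≤ D d := fun d =>
    div_nonneg (mul_nonneg (by positivity) (by linarith [epsBit_le_one d x])) (by positivity)
  -- shifted sums
  have hGs : HasSum (fun d : ℕ => G (d + 1)) (1 - x) := by
    have := (hasSum_nat_add_iff' 1).2 hhasG
    simp only [Finset.sum_range_one, hG, heps0, pow_zero] at this
    convert this using 1
    · rfl
    ring_nf
  have hDs : HasSum (fun d : ℕ => D (d + 1)) (2 - nu x) := by
    have := (hasSum_nat_add_iff' 1).2 hhasD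
    simp only [Finset.sum_range_one, hD] at this
    convert this using 1
    · rfl
    norm_num
  -- termwise comparison
  have hterm : ∀ d : ℕ, (a : ℝ) * G (d + 1) ≤ D (d + 1) := by
    intro d
    by_cases h : d + 1 < a
    · have := bits_one (d + 1) (by omega) h
      simp only [hG, hD, this]
      norm_num
    · push_neg at h
      simp only [hG, hD]
      have hnn : (0:ℝ) ≤ (1 - epsBit (d+1) x) / 2 ^ (d+1) :=
        div_nonneg (by linarith [epsBit_le_one (d+1) x]) (by positivity)
      have hcast : (a:ℝ) ≤ ((d+1 : ℕ):ℝ) := Nat.cast_le.2 h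
      have hmm := mul_le_mul_of_nonneg_right hcast hnn
      linarith [hmm, (mul_div_assoc ((d+1 : ℕ):ℝ) (1 - epsBit (d+1) x) ((2:ℝ) ^ (d+1))).symm.le]
  have := hasSum_le hterm (hGs.mul_left (a : ℝ)) hDs
  linarith

theorem relative_toll_linear_bound (a : ℕ) (ha : 2 ≤ a) :
    ∀ x : ℝ, 1 - 2 / 2 ^ a < x → x ≤ 1 - 1 / 2 ^ a →
      (nu x - x * Real.logb 2 (1 / x)) / x
        < 2 - (1 - x) * ((a : ℝ) - 2 + 1 / Real.log 2) := by
  intro x hlo hhi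
  have hpa : (0:ℝ) < 2 ^ a := by positivity
  have hx1 : x < 1 := by
    have : (0:ℝ) < 1 / 2 ^ a := by positivity
    linarith
  have hx0 : (0:ℝ) < x := by
    have h4 : (4:ℝ) ≤ 2 ^ a := by
      calc (4:ℝ) = 2 ^ 2 := by norm_num
      _ ≤ 2 ^ a := by exact pow_le_pow_right₀ (by norm_num) ha
    have : (2:ℝ) / 2 ^ a ≤ 1/2 := by
      rw [div_le_div_iff₀ hpa (by norm_num)]; linarith
    linarith
  have hnu := nu_le a ha x hlo hhi
  set L := Real.log 2 with hLdef
  have hL : 0 < L := Real.log_pos (by norm_num)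
  have hLne : L ≠ 0 := ne_of_gt hL
  have hca : (2:ℝ) ≤ (a:ℝ) := by exact_mod_cast ha
  have hlogx : Real.log x < x - 1 := Real.log_lt_sub_one_of_pos hx0 (ne_of_lt hx1)
  have hlb : x * Real.logb 2 (1/x) = -(x * Real.log x / L) := by
    rw [Real.logb, one_div, Real.log_inv]
    ring
  have hstrict : x * Real.log x / L < x * (x - 1) / L := by
    apply div_lt_div_of_pos_right _ hL
    exact (mul_lt_mul_iff_right₀ hx0).2 hlogx
  have main : nu x + x * (x - 1) / L ≤ (2 - (1 - x) * ((a:ℝ) - 2 + 1/L)) * x := by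
    have h2 : (0:ℝ) ≤ (1 - x)^2 * ((a:ℝ) - 2) := mul_nonneg (sq_nonneg _) (by linarith)
    have expand : (2 - (1 - x) * ((a:ℝ) - 2 + 1/L)) * x
        = 2*x - x*(1-x)*((a:ℝ)-2) - x*(1-x)/L := by
      field_simp
      ring
    have cancel : x * (x - 1) / L = -(x*(1-x)/L) := by ring
    rw [expand, cancel]
    nlinarith [hnu, h2]
  have key : nu x - x * Real.logb 2 (1/x) < (2 - (1 - x) * ((a:ℝ) - 2 + 1/L)) * x := by
    rw [hlb]
    have : nu x - -(x * Real.log x / L) = nu x + x * Real.log x / L := by ring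
    rw [this]
    calc nu x + x * Real.log x / L < nu x + x * (x - 1) / L := by linarith
    _ ≤ _ := main
  rw [div_lt_iff₀ hx0]
  exact key
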